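/- Let X be a finite type, let a, b : X → ℝ be nonnegative weight functions, and let σ : ℝ → ℝ be the logistic sigmoid σ(t) = 1/(1 + exp(−t)). Then for every score function f : X → ℝ, one has ∑_{x} [ a(x)·log(σ(f(x))) + b(x)·log(1 − σ(f(x))) ] ≤ ∑_{x} [ a(x)·log(a(x)/(a(x)+b(x))) + b(x)·log(b(x)/(a(x)+b(x))) ], where a term of the form 0·log(0/(0+c)) is interpreted as 0. -/
import Mathlib


/-- The logistic sigmoid `σ(t) = 1/(1 + exp(-t))`. -/
noncomputable def sigmoid (t : ℝ) : ℝ := 1 / (1 + Real.exp (-t))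

lemma sigmoid_pos (t : ℝ) : 0 < sigmoid t := by
  unfold sigmoid
  positivity

lemma sigmoid_lt_one (t : ℝ) : sigmoid t < 1 := by
  unfold sigmoid
  rw [div_lt_one (by positivity)]
  linarith [Real.exp_pos (-t)]

lemma gibbs_pointwise (a b p : ℝ) (ha : 0 ≤ a) (hb : 0 ≤ b)
    (hp0 : 0 < p) (hp1 : p < 1) :
    a * Real.log p + b * Real.log (1 - p) ≤
      a * Real.log (a / (a + b)) + b * Real.log (b / (a + b)) := by
  rcases ha.eq_or_lt with rfl | ha'
  · rcases hb.eq_or_lt with rfl | hb'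
    · simp
    · have : (0 : ℝ) + b = b := by ring
      rw [this, div_self hb'.ne', Real.log_one]
      have hlog : Real.log (1 - p) ≤ 0 :=
        Real.log_nonpos (by linarith) (by linarith)
      nlinarith
  · rcases hb.eq_or_lt with rfl | hb'
    · have : a + 0 = a := by ring
      rw [this, div_self ha'.ne', Real.log_one]
      have hlog : Real.log p ≤ 0 := Real.log_nonpos hp0.le hp1.le
      nlinarith
    · set s := a + b with hs
      have hspos : 0 < s := by positivity
      have h1p : 0 < 1 - p := by linarith
      have key1 : Real.log (p * s / a) ≤ p * s / a - 1 :=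
        Real.log_le_sub_one_of_pos (by positivity)
      have key2 : Real.log ((1 - p) * s / b) ≤ (1 - p) * s / b - 1 :=
        Real.log_le_sub_one_of_pos (by positivity)
      have e1 : Real.log (p * s / a) = Real.log p - Real.log (a / s) := by
        rw [Real.log_div (by positivity) ha'.ne', Real.log_mul hp0.ne' hspos.ne',
          Real.log_div ha'.ne' hspos.ne']
        ring
      have e2 : Real.log ((1 - p) * s / b) = Real.log (1 - p) - Real.log (b / s) := by
        rw [Real.log_div (by positivity) hb'.ne', Real.log_mul h1p.ne' hspos.ne',
          Real.log_div hb'.ne' hspos.ne']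
        ring
      have k1 : a * (Real.log p - Real.log (a / s)) ≤ p * s - a := by
        rw [← e1]
        calc a * Real.log (p * s / a) ≤ a * (p * s / a - 1) :=
              mul_le_mul_of_nonneg_left key1 ha'.le
          _ = p * s - a := by field_simp
      have k2 : b * (Real.log (1 - p) - Real.log (b / s)) ≤ (1 - p) * s - b := by
        rw [← e2]
        calc b * Real.log ((1 - p) * s / b) ≤ b * ((1 - p) * s / b - 1) :=
              mul_le_mul_of_nonneg_left key2 hb'.le
          _ = (1 - p) * s - b := by field_simp
      nlinarith

/-- NCE bound for the sigmoid parameterization: for any score function `f`,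
the NCE objective is bounded above by the Bayes-optimal discrimination
objective with optimal classifier `g*(x) = a(x)/(a(x)+b(x))`.  (Terms with a
zero first factor vanish, matching the stated convention.) -/
theorem nce_sigmoid_bound {X : Type*} [Fintype X]
    (a b : X → ℝ) (ha : ∀ x, 0 ≤ a x) (hb : ∀ x, 0 ≤ b x)
    (f : X → ℝ) :
    ∑ x, (a x * Real.log (sigmoid (f x)) + b x * Real.log (1 - sigmoid (f x))) ≤
      ∑ x, (a x * Real.log (a x / (a x + b x)) +
            b x * Real.log (b x / (a x + b x))) := by
  apply Finset.sum_le_sum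
  intro x _
  exact gibbs_pointwise (a x) (b x) (sigmoid (f x)) (ha x) (hb x)
    (sigmoid_pos (f x)) (sigmoid_lt_one (f x))
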